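/- Let n ≥ 3 be an odd integer, and let c = cos(π/n). Then the minimal polynomial of 2c + √2 over the subfield ℚ(c) of ℝ is X² − 4c·X + (4c² − 2). -/

import Mathlib

set_option synthInstance.maxHeartbeats 400000
set_option maxHeartbeats 1000000

open Real Polynomial IntermediateField

noncomputable section


lemma pow_eq_pow_of_modEq' {G : Type*} [DivisionRing G] {x : G} {M a b : ℕ}
    (hx : x ^ M = 1) (h : a ≡ b [MOD M]) : x ^ a = x ^ b := by
  have key : ∀ t : ℕ, x ^ t = x ^ (t % M) := by
    intro t
    conv_lhs => rw [← Nat.div_add_mod t M]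
    rw [pow_add, pow_mul, hx, one_pow, one_mul]
  rw [key a, key b, h]

lemma sqrt2_not_mem' (n : ℕ) (hn : 3 ≤ n) (hodd : Odd n) :
    Real.sqrt 2 ∉ IntermediateField.adjoin ℚ ({Real.cos (π / n)} : Set ℝ) := by
  intro hmem
  have hn0 : (n : ℝ) ≠ 0 := by positivity
  have hnC : (n : ℂ) ≠ 0 := by exact_mod_cast hn0
  set M : ℕ+ := ⟨8 * n, by positivity⟩ with hM
  have hMn : (M : ℕ) = 8 * n := rfl
  haveI : NeZero (M : ℕ) := ⟨M.pos.ne'⟩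
  -- the primitive root
  set ζ : ℂ := Complex.exp (2 * Real.pi * Complex.I / (8 * n)) with hζdef
  have hζ : IsPrimitiveRoot ζ M := by
    have := Complex.isPrimitiveRoot_exp (M : ℕ) (by simp [hMn]; omega)
    convert this using 2
    push_cast [hMn]
    ring
  have hpow : ∀ j : ℕ, ζ ^ j = Complex.exp (2 * Real.pi * Complex.I * j / (8 * n)) := by
    intro j
    rw [hζdef, ← Complex.exp_nat_mul]
    ring_nf
  have hc4 : ((Real.cos (π / n) : ℝ) : ℂ) = (ζ ^ 4 + (ζ ^ 4)⁻¹) / 2 := by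
    rw [hpow, ← Complex.exp_neg, Complex.ofReal_cos, Complex.cos, Complex.ofReal_div]
    push_cast
    ring_nf
  have hsq : ((Real.sqrt 2 : ℝ) : ℂ) = ζ ^ n + (ζ ^ n)⁻¹ := by
    rw [hpow, ← Complex.exp_neg]
    have h1 : 2 * Real.pi * Complex.I * n / (8 * n) = (π/4 : ℝ) * Complex.I := by
      push_cast; field_simp; ring
    rw [h1, ← neg_mul, Complex.exp_mul_I, Complex.exp_mul_I, Complex.cos_neg, Complex.sin_neg,
      ← Complex.ofReal_cos, Real.cos_pi_div_four]
    push_cast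
    ring
  have h4n : ζ ^ (4 * n) = -1 := by
    rw [hpow]
    push_cast
    have h1 : 2 * Real.pi * Complex.I * (4 * n) / (8 * n) = Real.pi * Complex.I := by
      field_simp; ring
    rw [h1, Complex.exp_pi_mul_I]
  -- the cyclotomic field K
  set K : IntermediateField ℚ ℂ := IntermediateField.adjoin ℚ ({ζ} : Set ℂ) with hK
  have hζK : ζ ∈ K := IntermediateField.subset_adjoin _ _ rfl
  set ζ' : K := ⟨ζ, hζK⟩ with hζ'def
  have hζ' : IsPrimitiveRoot ζ' M := by
    rwa [← IsPrimitiveRoot.coe_submonoidClass_iff (B := IntermediateField ℚ ℂ)]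
  have hint : IsIntegral ℚ ζ :=
    ⟨X ^ (M:ℕ) - 1, monic_X_pow_sub_C 1 (by simp [hMn]; omega), by
      simp [hζ.pow_eq_one]⟩
  have Hadj := IntermediateField.adjoin_simple_toSubalgebra_of_isAlgebraic hint.isAlgebraic
  haveI : IsCyclotomicExtension {(M:ℕ)} ℚ K := by
    refine IsCyclotomicExtension.equiv _ _ _ (h := ?_) (.refl : K.toSubalgebra ≃ₐ[ℚ] _)
    rw [show K.toSubalgebra = Algebra.adjoin ℚ {ζ} from Hadj]
    exact hζ.adjoin_isCyclotomicExtension ℚ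
  -- the exponent k by CRT
  have hco2n : Nat.Coprime 2 n := by
    unfold Nat.Coprime
    rw [Nat.gcd_rec, Nat.odd_iff.mp hodd]
    simp
  have hco8n : Nat.Coprime 8 n := by
    have := hco2n.pow_left 3
    norm_num at this
    exact this
  obtain ⟨k, hk8, hkn⟩ := Nat.chineseRemainder hco8n 3 1
  have hk8' : k % 8 = 3 := by simpa [Nat.ModEq] using hk8
  have hkn' : k % n = 1 := by
    have : (1 : ℕ) % n = 1 := Nat.mod_eq_of_lt (by omega)
    simpa [Nat.ModEq, this] using hkn
  have hcop : Nat.Coprime k (M : ℕ) := by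
    rw [hMn]
    have h8 : Nat.Coprime 8 k := by
      unfold Nat.Coprime
      rw [Nat.gcd_rec, hk8']
      decide
    have hn' : Nat.Coprime n k := by
      unfold Nat.Coprime
      rw [Nat.gcd_rec, hkn']
      simp
    exact Nat.Coprime.mul_right h8.symm hn'.symm
  -- the automorphism σ
  have hirr : Irreducible (cyclotomic M ℚ) := Polynomial.cyclotomic.irreducible_rat M.pos
  set u : (ZMod (M:ℕ))ˣ := ZMod.unitOfCoprime k hcop with hu
  set σ : K ≃ₐ[ℚ] K := (IsCyclotomicExtension.autEquivPow K hirr).symm u with hσ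
  set v : ℕ := ((k : ZMod (M:ℕ))).val with hvdef
  have hσζ' : σ ζ' = ζ' ^ v := by
    have hz0 := IsCyclotomicExtension.zeta_spec M ℚ K
    have hval : hz0.autToPow ℚ σ = u := by
      have := (IsCyclotomicExtension.autEquivPow K hirr).apply_symm_apply u
      rw [← this, hσ]
      rfl
    have hspec := hz0.autToPow_spec ℚ σ
    rw [hval] at hspec
    have hσζ0 : σ (IsCyclotomicExtension.zeta M ℚ K) =
        (IsCyclotomicExtension.zeta M ℚ K) ^ v := by
      rw [← hspec]
      congr 1
    obtain ⟨a, -, ha⟩ := hz0.eq_pow_of_pow_eq_one (hζ'.pow_eq_one)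
    rw [← ha, map_pow, hσζ0, ← pow_mul, mul_comm, pow_mul]
  -- congruences
  have hvk : v ≡ k [MOD (M:ℕ)] := by
    simp [hvdef, Nat.ModEq, ZMod.val_natCast, Nat.mod_mod]
  have hk2n : k ≡ 1 [MOD 2*n] := by
    have h2 : k ≡ 1 [MOD 2] := by
      show k % 2 = 1 % 2
      omega
    exact (Nat.modEq_and_modEq_iff_modEq_mul hco2n).mp ⟨h2, hkn⟩
  have e1 : 4 * v ≡ 4 [MOD (M:ℕ)] := by
    have hv2n : v ≡ 1 [MOD 2*n] :=
      ((hvk.of_dvd (by rw [hMn]; exact ⟨4, by ring⟩)).trans hk2n)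
    have h := hv2n.mul_left' (c := 4)
    rw [show 4 * (2*n) = (M:ℕ) by rw [hMn]; ring] at h
    simpa using h
  have e2 : n * v ≡ n * 3 [MOD (M:ℕ)] := by
    have hv8 : v ≡ 3 [MOD 8] := (hvk.of_dvd (by rw [hMn]; exact ⟨n, rfl⟩)).trans hk8
    have := hv8.mul_left' (c := n)
    rwa [show n * 8 = (M:ℕ) by rw [hMn]; ring] at this
  -- σ fixes c'
  set c' : K := (ζ' ^ 4 + (ζ' ^ 4)⁻¹) / 2 with hc'def
  have hσc' : σ c' = c' := by
    rw [hc'def, map_div₀, map_add, map_inv₀, map_pow, hσζ', map_ofNat,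
      ← pow_mul, mul_comm v 4,
      pow_eq_pow_of_modEq' hζ'.pow_eq_one e1]
  -- σ negates s'
  set s' : K := ζ' ^ n + (ζ' ^ n)⁻¹ with hs'def
  have hσs' : σ s' = -s' := by
    have hu4 : (ζ' ^ n) ^ 4 = -1 := by
      apply Subtype.coe_injective
      push_cast
      rw [← pow_mul, mul_comm n 4]
      exact h4n
    have hζne : ζ' ≠ 0 := by
      intro h
      exact Complex.exp_ne_zero _ (congrArg Subtype.val h)
    have hune : (ζ' ^ n) ≠ 0 := pow_ne_zero n hζne
    have hinv1 : (ζ' ^ n)⁻¹ = -(ζ' ^ n) ^ 3 := by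
      apply inv_eq_of_mul_eq_one_right
      have : ζ' ^ n * -(ζ' ^ n) ^ 3 = -((ζ' ^ n) ^ 4) := by ring
      rw [this, hu4, neg_neg]
    have hinv3 : ((ζ' ^ n) ^ 3)⁻¹ = -(ζ' ^ n) := by
      apply inv_eq_of_mul_eq_one_right
      have : (ζ' ^ n) ^ 3 * -(ζ' ^ n) = -((ζ' ^ n) ^ 4) := by ring
      rw [this, hu4, neg_neg]
    rw [hs'def, map_add, map_inv₀, map_pow, hσζ', ← pow_mul, mul_comm v n,
      pow_eq_pow_of_modEq' hζ'.pow_eq_one e2, pow_mul, hinv3, hinv1]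
    ring
  -- transfer the hypothesis to ℂ
  have hmemC : ((Real.sqrt 2 : ℝ) : ℂ) ∈
      IntermediateField.adjoin ℚ ({((Real.cos (π / n) : ℝ) : ℂ)} : Set ℂ) := by
    have himg := IntermediateField.adjoin_map (F := ℚ) (S := ({Real.cos (π / n)} : Set ℝ))
      (Complex.ofRealAm.restrictScalars ℚ)
    have hx : ((Real.sqrt 2 : ℝ) : ℂ) ∈
        (IntermediateField.adjoin ℚ ({Real.cos (π / n)} : Set ℝ)).map
          (Complex.ofRealAm.restrictScalars ℚ) := ⟨_, hmem, rfl⟩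
    rw [himg, Set.image_singleton] at hx
    exact hx
  have hcK : ((Real.cos (π / n) : ℝ) : ℂ) ∈ K := by
    rw [hc4]
    exact div_mem (add_mem (pow_mem hζK 4) (inv_mem (pow_mem hζK 4)))
      (by simpa using K.algebraMap_mem (2:ℚ))
  have hle : IntermediateField.adjoin ℚ ({((Real.cos (π / n) : ℝ) : ℂ)} : Set ℂ) ≤ K := by
    rw [IntermediateField.adjoin_le_iff, Set.singleton_subset_iff]
    exact hcK
  have hc'coe : ((Real.cos (π / n) : ℝ) : ℂ) = (c' : ℂ) := by
    rw [hc4, hc'def]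
    show _ = K.val ((ζ' ^ 4 + (ζ' ^ 4)⁻¹) / 2)
    rw [map_div₀, map_add, map_inv₀, map_pow, map_ofNat]
    rfl
  have hs'coe : ((Real.sqrt 2 : ℝ) : ℂ) = (s' : ℂ) := by
    rw [hsq, hs'def]
    show _ = K.val (ζ' ^ n + (ζ' ^ n)⁻¹)
    rw [map_add, map_inv₀, map_pow]
    rfl
  set φ : IntermediateField.adjoin ℚ ({((Real.cos (π / n) : ℝ) : ℂ)} : Set ℂ) →ₐ[ℚ] ℂ :=
    (IntermediateField.adjoin ℚ ({((Real.cos (π / n) : ℝ) : ℂ)} : Set ℂ)).val with hφ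
  set ψ : IntermediateField.adjoin ℚ ({((Real.cos (π / n) : ℝ) : ℂ)} : Set ℂ) →ₐ[ℚ] ℂ :=
    K.val.comp ((σ : K →ₐ[ℚ] K).comp (IntermediateField.inclusion hle)) with hψ
  have hincl_c : IntermediateField.inclusion hle
      ⟨_, IntermediateField.subset_adjoin _ _ rfl⟩ = c' :=
    Subtype.coe_injective hc'coe
  have hagree : ψ = φ := by
    apply IntermediateField.adjoin_algHom_ext
    intro x hx
    rcases hx with rfl
    rw [hψ, hφ]
    simp only [AlgHom.coe_comp, Function.comp_apply, AlgEquiv.coe_algHom,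
      IntermediateField.coe_val, AlgHom.coe_coe]
    change K.val (σ (IntermediateField.inclusion hle
      ⟨_, IntermediateField.subset_adjoin _ _ rfl⟩)) = _
    rw [hincl_c, hσc']
    exact hc'coe.symm
  have hs'mem : IntermediateField.inclusion hle ⟨_, hmemC⟩ = s' :=
    Subtype.coe_injective hs'coe
  have hfinal := congrArg (fun f => f ⟨_, hmemC⟩) hagree
  simp only [hψ, hφ, AlgHom.coe_comp, Function.comp_apply, AlgEquiv.coe_algHom,
    IntermediateField.coe_val, AlgHom.coe_coe] at hfinal
  change ((σ (IntermediateField.inclusion hle ⟨_, hmemC⟩) : K) : ℂ) = ((Real.sqrt 2 : ℝ) : ℂ)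
    at hfinal
  rw [hs'mem, hσs'] at hfinal
  -- hfinal : ↑(-s') = ↑√2
  have hzero : ((Real.sqrt 2 : ℝ) : ℂ) = 0 := by
    have : (-(s' : ℂ)) = ((Real.sqrt 2 : ℝ) : ℂ) := by
      rw [← hfinal]; push_cast; ring
    rw [← hs'coe] at this
    linear_combination -this / 2
  have h1 : (Real.sqrt 2 : ℝ) = 0 := by exact_mod_cast hzero
  have h2 : (0:ℝ) < Real.sqrt 2 := Real.sqrt_pos.mpr (by norm_num)
  simp_all




theorem minpoly_two_cos_pi_n_plus_sqrt_two
    (n : ℕ) (hn : 3 ≤ n) (hodd : Odd n)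
    (c : ℝ) (hc : c = Real.cos (π / n)) :
    (minpoly (IntermediateField.adjoin ℚ ({c} : Set ℝ)) (2 * c + Real.sqrt 2)).map
        (algebraMap (IntermediateField.adjoin ℚ ({c} : Set ℝ)) ℝ)
      = X ^ 2 - C (4 * c) * X + C (4 * c ^ 2 - 2) := by
  set F : IntermediateField ℚ ℝ := IntermediateField.adjoin ℚ ({c} : Set ℝ) with hF
  have hcF : c ∈ F := IntermediateField.subset_adjoin _ _ rfl
  have hs2 : Real.sqrt 2 ∉ F := by
    rw [hF, hc]
    exact sqrt2_not_mem' n hn hodd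
  have h4F : (4:ℝ) ∈ F := by simpa using F.algebraMap_mem (4:ℚ)
  have h2F : (2:ℝ) ∈ F := by simpa using F.algebraMap_mem (2:ℚ)
  set a : F := ⟨4*c, mul_mem h4F hcF⟩ with ha
  set b : F := ⟨4*c^2-2, sub_mem (mul_mem h4F (pow_mem hcF 2)) h2F⟩ with hb
  set p : F[X] := X^2 - C a * X + C b with hp
  have hmonic : p.Monic := by
    rw [hp]
    monicity!
  have hdeg : p.natDegree = 2 := by
    rw [hp]
    compute_degree!
  have hsq2 : Real.sqrt 2 ^ 2 = 2 := Real.sq_sqrt (by norm_num)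
  have haeval : aeval (2*c + Real.sqrt 2) p = 0 := by
    rw [hp]
    rw [map_add, map_sub, map_mul, map_pow, aeval_X, aeval_C, aeval_C]
    show (2*c + Real.sqrt 2)^2 - (4*c) * (2*c + Real.sqrt 2) + (4*c^2-2) = 0
    linear_combination hsq2
  have hirr : Irreducible p := by
    rw [hmonic.irreducible_iff_roots_eq_zero_of_degree_le_three (by omega) (by omega)]
    by_contra hroots
    obtain ⟨x, hx⟩ := Multiset.exists_mem_of_ne_zero hroots
    rw [mem_roots hmonic.ne_zero] at hx
    have hx0 : x^2 - a*x + b = 0 := by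
      have := hx
      rw [hp] at this
      simpa [IsRoot, eval_add, eval_sub, eval_mul, eval_pow, eval_X, eval_C] using this
    have hxR : ((x:ℝ))^2 - (4*c)*(x:ℝ) + (4*c^2-2) = 0 := by
      have h := congrArg (Subtype.val) hx0
      push_cast at h
      convert h using 2
    have hprod : ((x:ℝ) - 2*c - Real.sqrt 2) * ((x:ℝ) - 2*c + Real.sqrt 2) = 0 := by
      linear_combination hxR - hsq2
    set y : F := x - ⟨2*c, mul_mem h2F hcF⟩ with hy
    have hyc : (y:ℝ) = (x:ℝ) - 2*c := rfl
    rcases mul_eq_zero.mp hprod with h | h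
    · apply hs2
      have : Real.sqrt 2 = (y:ℝ) := by rw [hyc]; linarith
      rw [this]
      exact y.2
    · apply hs2
      have : Real.sqrt 2 = ((-y : F):ℝ) := by push_cast [hyc]; linarith
      rw [this]
      exact (-y).2
  have hminpoly : minpoly F (2*c + Real.sqrt 2) = p :=
    (minpoly.eq_of_irreducible_of_monic hirr haeval hmonic).symm
  rw [hminpoly, hp]
  simp only [Polynomial.map_add, Polynomial.map_sub, Polynomial.map_mul, Polynomial.map_pow,
    map_X, map_C]
  rfl


end
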